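/- The functor a_1 from torsion R-modules to A is right adjoint to the evaluation functor (V,T,q) ↦ T: for every object X = (V,T,q) of A and every torsion R-module T′ there is a natural isomorphism Hom_A(X, a_1(T′)) ≅ Hom_R(T, T′). Consequently, if I is a torsion R-module that is injective as an R-module, then a_1(I) is an injective object of A. -/

import Mathlib

open CategoryTheory Polynomial TensorProduct

noncomputable section

variable (k : Type) [Field k]

/-- `t = k[c, c⁻¹]`, the localization of `R = k[c]` inverting the variable. -/
abbrev LocX : Type := Localization.Away (Polynomial.X : Polynomial k)

/-- An object of the semifree torsion category `A`: a `k`-vector space `V`, a torsion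
`k[c]`-module `T`, and a `k[c]`-linear map `q : t ⊗_k V → T`. -/
structure SObj : Type 1 where
  V : Type
  [addV : AddCommGroup V]
  [modV : Module k V]
  T : Type
  [addT : AddCommGroup T]
  [modT : Module (Polynomial k) T]
  torsion : ∀ x : T, ∃ n : ℕ, (Polynomial.X : Polynomial k) ^ n • x = 0
  q : (TensorProduct k (LocX k) V) →ₗ[Polynomial k] T

attribute [instance] SObj.addV SObj.modV SObj.addT SObj.modT

variable {k}

/-- `t ⊗ φ`, as a `k[c]`-linear map. -/
def tmap {V W : Type} [AddCommGroup V] [Module k V] [AddCommGroup W] [Module k W]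
    (φ : V →ₗ[k] W) :
    (TensorProduct k (LocX k) V) →ₗ[Polynomial k] (TensorProduct k (LocX k) W) :=
  TensorProduct.AlgebraTensorModule.map
    (LinearMap.id : LocX k →ₗ[Polynomial k] LocX k) φ

/-- A morphism in the semifree torsion category: a pair of a `k`-linear map and a
`k[c]`-linear map commuting with the structure maps. -/
@[ext]
structure SHom (X Y : SObj k) : Type where
  φ : X.V →ₗ[k] Y.V
  ψ : X.T →ₗ[Polynomial k] Y.T
  comm : ψ ∘ₗ X.q = Y.q ∘ₗ tmap φ

lemma tmap_id {V : Type} [AddCommGroup V] [Module k V] :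
    tmap (LinearMap.id : V →ₗ[k] V) = LinearMap.id := by
  ext x
  simp [tmap]

lemma tmap_comp {V W U : Type} [AddCommGroup V] [Module k V] [AddCommGroup W] [Module k W]
    [AddCommGroup U] [Module k U] (φ₁ : V →ₗ[k] W) (φ₂ : W →ₗ[k] U) :
    tmap (φ₂ ∘ₗ φ₁) = tmap φ₂ ∘ₗ tmap (k := k) φ₁ := by
  ext x
  simp [tmap]

instance : Category (SObj k) where
  Hom X Y := SHom X Y
  id X :=
    { φ := LinearMap.id
      ψ := LinearMap.id
      comm := by rw [tmap_id]; simp }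
  comp {X Y Z} f g :=
    { φ := g.φ ∘ₗ f.φ
      ψ := g.ψ ∘ₗ f.ψ
      comm := by
        rw [tmap_comp, LinearMap.comp_assoc, f.comm, ← LinearMap.comp_assoc, g.comm,
          LinearMap.comp_assoc] }
  id_comp f := by apply SHom.ext <;> simp
  comp_id f := by apply SHom.ext <;> simp
  assoc f g h := by apply SHom.ext <;> simp [LinearMap.comp_assoc]

/-- The object `f_G(V) = (V, 0, 0)`. -/
def fG (V : Type) [AddCommGroup V] [Module k V] : SObj k where
  V := V
  T := PUnit
  torsion _ := ⟨0, Subsingleton.elim _ _⟩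
  q := 0

/-- The object `f_1(T) = (0, T, 0)`. -/
def f1 (T : Type) [AddCommGroup T] [Module (Polynomial k) T]
    (tor : ∀ x : T, ∃ n : ℕ, (Polynomial.X : Polynomial k) ^ n • x = 0) : SObj k where
  V := PUnit
  T := T
  torsion := tor
  q := 0

section a1

variable (T : Type) [AddCommGroup T] [Module (Polynomial k) T]

/-- `T^t = Hom_{k[c]}(t, T)` regarded as a `k`-vector space (with `a • f = C a • f`). -/
abbrev a1V : Type := LocX k →ₗ[Polynomial k] T

noncomputable instance : Module k (a1V (k := k) T) :=
  Module.compHom (LocX k →ₗ[Polynomial k] T) (algebraMap k (Polynomial k))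

/-- The evaluation map `t ⊗_k T^t → T`, `x ⊗ f ↦ f x`, as a `k[c]`-linear map. -/
def a1q : (TensorProduct k (LocX k) (a1V (k := k) T)) →ₗ[Polynomial k] T := by
  letI : Module k T := Module.compHom T (algebraMap k (Polynomial k))
  let β : LocX k →ₗ[k] (a1V (k := k) T) →ₗ[k] T :=
    LinearMap.mk₂ k (fun x (g : a1V (k := k) T) => g x)
      (fun x y g => map_add _ x y)
      (fun a x g => by
        show g (a • x) = a • g x
        rw [← algebraMap_smul (Polynomial k) a x, map_smul]
        rfl)
      (fun x g h => rfl)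
      (fun a x g => rfl)
  refine { toFun := TensorProduct.lift β, map_add' := map_add _, map_smul' := ?_ }
  intro r z
  induction z using TensorProduct.induction_on with
  | zero => simp
  | tmul x g =>
    rw [TensorProduct.smul_tmul']
    simp only [RingHom.id_apply, TensorProduct.lift.tmul, LinearMap.mk₂_apply, β]
    exact map_smul _ r x
  | add z w hz hw =>
    try simp only [LinearMap.coe_mk, AddHom.coe_mk] at hz hw ⊢
    rw [smul_add, map_add, hz, hw, map_add, smul_add]

/-- The object `a_1(T) = (T^t, T, ev)`. -/
def a1 (tor : ∀ x : T, ∃ n : ℕ, (Polynomial.X : Polynomial k) ^ n • x = 0) : SObj k where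
  V := a1V (k := k) T
  T := T
  torsion := tor
  q := a1q T

end a1

end

noncomputable section Aux

variable {k : Type} [Field k]

lemma tmap_zero {V W : Type} [AddCommGroup V] [Module k V] [AddCommGroup W] [Module k W] :
    tmap (0 : V →ₗ[k] W) = 0 := by
  ext x
  simp [tmap]

lemma a1q_tmul {T' : Type} [AddCommGroup T'] [Module (Polynomial k) T']
    (x : LocX k) (g : a1V (k := k) T') : a1q T' (x ⊗ₜ g) = g x := rfl

lemma phi_eval {T' : Type} [AddCommGroup T'] [Module (Polynomial k) T']
    (tor : ∀ x : T', ∃ n : ℕ, (Polynomial.X : Polynomial k) ^ n • x = 0)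
    {X : SObj k} (θ : SHom X (a1 T' tor)) (v : X.V) (x : LocX k) :
    (show a1V (k := k) T' from θ.φ v) x = θ.ψ (X.q (x ⊗ₜ v)) := by
  have h := LinearMap.congr_fun θ.comm (x ⊗ₜ v)
  simp only [LinearMap.comp_apply, tmap,
    TensorProduct.AlgebraTensorModule.map_tmul, LinearMap.id_apply] at h
  exact h.symm

/-- The `φ`-component corresponding to a `k[c]`-linear map `ψ : X.T → T'`. -/
def mkPhi {T' : Type} [AddCommGroup T'] [Module (Polynomial k) T']
    (X : SObj k) (ψ : X.T →ₗ[Polynomial k] T') : X.V →ₗ[k] a1V (k := k) T' where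
  toFun v :=
    { toFun := fun x => ψ (X.q (x ⊗ₜ v))
      map_add' := fun x y => by
        show ψ (X.q ((x + y) ⊗ₜ v)) = ψ (X.q (x ⊗ₜ v)) + ψ (X.q (y ⊗ₜ v))
        rw [TensorProduct.add_tmul, map_add, map_add]
      map_smul' := fun p x => by
        show ψ (X.q ((p • x) ⊗ₜ v)) = p • ψ (X.q (x ⊗ₜ v))
        rw [← TensorProduct.smul_tmul', map_smul, map_smul] }
  map_add' v w := by
    apply LinearMap.ext
    intro x
    show ψ (X.q (x ⊗ₜ (v + w))) = ψ (X.q (x ⊗ₜ v)) + ψ (X.q (x ⊗ₜ w))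
    rw [TensorProduct.tmul_add, map_add, map_add]
  map_smul' a v := by
    apply LinearMap.ext
    intro x
    show ψ (X.q (x ⊗ₜ (a • v))) = (algebraMap k (Polynomial k) a) • ψ (X.q (x ⊗ₜ v))
    rw [← map_smul ψ, ← map_smul X.q, TensorProduct.smul_tmul',
      algebraMap_smul (Polynomial k) a x, TensorProduct.smul_tmul]

lemma key_bijective (X : SObj k) (T' : Type) [AddCommGroup T'] [Module (Polynomial k) T']
    (tor : ∀ x : T', ∃ n : ℕ, (Polynomial.X : Polynomial k) ^ n • x = 0) :
    Function.Bijective (fun θ : SHom X (a1 T' tor) => θ.ψ) := by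
  constructor
  · intro θ₁ θ₂ h
    refine SHom.ext ?_ h
    apply LinearMap.ext
    intro v
    apply LinearMap.ext (M := LocX k)
    intro x
    have h' : θ₁.ψ = θ₂.ψ := h
    rw [phi_eval tor θ₁ v x, phi_eval tor θ₂ v x, h']
  · intro ψ
    refine ⟨⟨mkPhi X ψ, ψ, ?_⟩, rfl⟩
    apply LinearMap.ext
    intro z
    induction z using TensorProduct.induction_on with
    | zero => simp
    | tmul x v =>
      simp only [LinearMap.comp_apply, tmap,
        TensorProduct.AlgebraTensorModule.map_tmul, LinearMap.id_apply]
      exact (a1q_tmul x (mkPhi X ψ v)).symm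
    | add z w hz hw =>
      simp only [LinearMap.comp_apply] at hz hw ⊢
      rw [map_add, map_add, map_add, map_add, hz, hw]

lemma mono_psi_injective {X Y : SObj k} (f : X ⟶ Y) [Mono f] :
    Function.Injective f.ψ := by
  rw [← LinearMap.ker_eq_bot, eq_bot_iff]
  intro x hx
  set K := LinearMap.ker f.ψ with hK
  have torK : ∀ y : K, ∃ n : ℕ, (Polynomial.X : Polynomial k) ^ n • y = 0 := by
    intro y
    obtain ⟨n, hn⟩ := X.torsion y.1
    exact ⟨n, Subtype.ext hn⟩
  let Z : SObj k := f1 K torK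
  let ι : Z ⟶ X := ⟨0, K.subtype, by
    show K.subtype ∘ₗ (0 : _ →ₗ[Polynomial k] _) = X.q ∘ₗ tmap 0
    rw [tmap_zero, LinearMap.comp_zero, LinearMap.comp_zero]⟩
  let z : Z ⟶ X := ⟨0, 0, by
    show (0 : _ →ₗ[Polynomial k] _) ∘ₗ (0 : _ →ₗ[Polynomial k] _) = X.q ∘ₗ tmap 0
    rw [tmap_zero, LinearMap.comp_zero, LinearMap.comp_zero]⟩
  have hcomp : ι ≫ f = z ≫ f := by
    refine SHom.ext rfl ?_
    apply LinearMap.ext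
    intro y
    show f.ψ (K.subtype y) = f.ψ 0
    rw [map_zero]
    exact y.2
  have h : ι = z := (cancel_mono f).mp hcomp
  have h2 : ι.ψ = z.ψ := congrArg SHom.ψ h
  have h3 := LinearMap.congr_fun h2 ⟨x, hx⟩
  exact (Submodule.mem_bot _).mpr h3

end Aux

/-- `a_1` is right adjoint to evaluation `(V,T,q) ↦ T`: for every object `X`
and torsion module `T′`, the natural map `Hom_A(X, a_1(T′)) → Hom_R(T, T′)`, `θ ↦ ψ_θ`, is
bijective. Consequently `a_1(I)` is injective in `A` whenever `I` is an injective torsion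
`R`-module. -/
theorem stmt2 (k : Type) [Field k] :
    (∀ (X : SObj k) (T' : Type) [AddCommGroup T'] [Module (Polynomial k) T']
      (tor : ∀ x : T', ∃ n : ℕ, (Polynomial.X : Polynomial k) ^ n • x = 0),
      Function.Bijective (fun θ : SHom X (a1 T' tor) => θ.ψ)) ∧
    ∀ (I : Type) [AddCommGroup I] [Module (Polynomial k) I]
      (tor : ∀ x : I, ∃ n : ℕ, (Polynomial.X : Polynomial k) ^ n • x = 0),
      Module.Injective (Polynomial k) I → Injective (a1 I tor) := by
  constructor
  · exact fun X T' _ _ tor => key_bijective X T' tor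
  · intro I _ _ tor hI
    constructor
    intro X Y g f _
    have hinj := mono_psi_injective f
    obtain ⟨ψ', hψ'⟩ := hI.out f.ψ hinj g.ψ
    obtain ⟨h, hh⟩ := (key_bijective Y I tor).2 ψ'
    have hh' : h.ψ = ψ' := hh
    refine ⟨h, (key_bijective X I tor).1 ?_⟩
    show h.ψ ∘ₗ f.ψ = g.ψ
    apply LinearMap.ext
    intro x
    simp only [LinearMap.comp_apply]
    rw [hh']
    exact hψ' x
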